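/- Let R be a commutative ring, A a commutative R-algebra, M an A-module, and a ∈ A. Suppose that the R-module M/aM is flat and that multiplication by a is injective on M. Then for every integer n ≥ 1, the R-module M/aⁿM is flat. -/

import Mathlib

open Pointwise

open LinearMap TensorProduct in
/-- Flatness is closed under extensions. -/
lemma flat_of_exact_flat_flat {R K N Q : Type*} [CommRing R] [AddCommGroup K] [AddCommGroup N]
    [AddCommGroup Q] [Module R K] [Module R N] [Module R Q]
    (i : K →ₗ[R] N) (p : N →ₗ[R] Q) (hi : Function.Injective i) (hp : Function.Surjective p)
    (hexact : Function.Exact i p) (hK : Module.Flat R K) (hQ : Module.Flat R Q) :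
    Module.Flat R N := by
  rw [Module.Flat.iff_lTensor_injective']
  intro I
  rw [injective_iff_map_eq_zero]
  intro x hx
  have h1 : lTensor Q I.subtype (rTensor I p x) = 0 := by
    rw [← LinearMap.comp_apply, lTensor_comp_rTensor, ← rTensor_comp_lTensor,
      LinearMap.comp_apply, hx, map_zero]
  have hQinj := Module.Flat.iff_lTensor_injective'.mp hQ I
  have h2 : rTensor I p x = 0 := by
    apply hQinj
    simpa using h1
  obtain ⟨y, rfl⟩ := (rTensor_exact (I : Type _) hexact hp x).mp h2
  have h3 : rTensor R i (lTensor K I.subtype y) = 0 := by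
    rw [← LinearMap.comp_apply, rTensor_comp_lTensor, ← lTensor_comp_rTensor,
      LinearMap.comp_apply, hx]
  have h4 : lTensor K I.subtype y = 0 :=
    Module.Flat.rTensor_preserves_injective_linearMap (M := R) i hi h3
  have h5 : y = 0 := Module.Flat.iff_lTensor_injective'.mp hK I (by simpa using h4)
  rw [h5, map_zero]

theorem flat_quotient_pow_smul_of_flat_quotient_smul
    {R A : Type*} [CommRing R] [CommRing A] [Algebra R A]
    {M : Type*} [AddCommGroup M] [Module R M] [Module A M] [IsScalarTower R A M]
    (a : A)
    (hflat : Module.Flat R (M ⧸ (a • (⊤ : Submodule A M))))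
    (hinj : Function.Injective (fun m : M => a • m))
    (n : ℕ) (hn : 1 ≤ n) :
    Module.Flat R (M ⧸ ((a ^ n) • (⊤ : Submodule A M))) := by
  -- injectivity of multiplication by powers of `a`
  have hinjpow : ∀ k : ℕ, Function.Injective (fun m : M => (a ^ k) • m) := by
    intro k
    induction k with
    | zero => intro x y hxy; simpa using hxy
    | succ k ih =>
      intro x y hxy
      simp only [pow_succ, mul_smul] at hxy
      exact hinj (ih hxy)
  have hmem : ∀ (b : A) (m : M), m ∈ b • (⊤ : Submodule A M) ↔ ∃ m', b • m' = m := by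
    intro b m
    constructor
    · rintro ⟨m', -, rfl⟩
      exact ⟨m', rfl⟩
    · rintro ⟨m', rfl⟩
      exact Submodule.smul_mem_pointwise_smul m' b ⊤ trivial
  induction n with
  | zero => omega
  | succ n ih =>
    rcases Nat.eq_or_lt_of_le hn with h1 | h1
    · -- n + 1 = 1
      have : n = 0 := by omega
      subst this
      show Module.Flat R (M ⧸ ((a ^ 1) • (⊤ : Submodule A M)))
      rw [pow_one]
      exact hflat
    · have hn' : 1 ≤ n := by omega
      have ihflat := ih hn'
      -- the three maps
      have hle1 : a • (⊤ : Submodule A M) ≤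
          ((a ^ (n + 1)) • (⊤ : Submodule A M)).comap (LinearMap.lsmul A M (a ^ n)) := by
        rintro x hx
        obtain ⟨m', rfl⟩ := (hmem a x).mp hx
        simp only [Submodule.mem_comap, LinearMap.lsmul_apply]
        refine (hmem _ _).mpr ⟨m', ?_⟩
        rw [pow_succ, mul_smul]
      have hle2 : (a ^ (n + 1)) • (⊤ : Submodule A M) ≤
          ((a ^ n) • (⊤ : Submodule A M)).comap (LinearMap.id (M := M)) := by
        rintro x hx
        obtain ⟨m', rfl⟩ := (hmem _ x).mp hx
        simp only [Submodule.mem_comap, LinearMap.id_coe, id_eq]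
        exact (hmem _ _).mpr ⟨a • m', by rw [pow_succ, mul_smul]⟩
      set i : (M ⧸ (a • (⊤ : Submodule A M))) →ₗ[A]
          (M ⧸ ((a ^ (n + 1)) • (⊤ : Submodule A M))) :=
        Submodule.mapQ _ _ (LinearMap.lsmul A M (a ^ n)) hle1 with hi_def
      set p : (M ⧸ ((a ^ (n + 1)) • (⊤ : Submodule A M))) →ₗ[A]
          (M ⧸ ((a ^ n) • (⊤ : Submodule A M))) :=
        Submodule.mapQ _ _ LinearMap.id hle2 with hp_def
      have hiinj : Function.Injective i := by
        rw [← LinearMap.ker_eq_bot, LinearMap.ker_eq_bot']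
        intro x hx
        obtain ⟨m, rfl⟩ := Submodule.Quotient.mk_surjective _ x
        rw [hi_def, Submodule.mapQ_apply, Submodule.Quotient.mk_eq_zero] at hx
        obtain ⟨m', hm'⟩ := (hmem _ _).mp hx
        rw [Submodule.Quotient.mk_eq_zero]
        refine (hmem _ _).mpr ⟨m', hinjpow n ?_⟩
        show a ^ n • (a • m') = a ^ n • m
        calc a ^ n • (a • m') = a ^ (n + 1) • m' := by rw [pow_succ, mul_smul]
          _ = a ^ n • m := hm'
      have hpsurj : Function.Surjective p := by
        intro y
        obtain ⟨m, rfl⟩ := Submodule.Quotient.mk_surjective _ y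
        exact ⟨Submodule.Quotient.mk m, by rw [hp_def, Submodule.mapQ_apply]; rfl⟩
      have hexact : Function.Exact i p := by
        intro x
        obtain ⟨m, rfl⟩ := Submodule.Quotient.mk_surjective _ x
        constructor
        · intro h
          rw [hp_def, Submodule.mapQ_apply, LinearMap.id_coe, id_eq,
            Submodule.Quotient.mk_eq_zero] at h
          obtain ⟨m', hm'⟩ := (hmem _ _).mp h
          refine ⟨Submodule.Quotient.mk m', ?_⟩
          rw [hi_def, Submodule.mapQ_apply, LinearMap.lsmul_apply, hm']
        · rintro ⟨y, hy⟩
          obtain ⟨m', rfl⟩ := Submodule.Quotient.mk_surjective _ y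
          rw [← hy, hi_def, Submodule.mapQ_apply, hp_def, Submodule.mapQ_apply,
            LinearMap.id_coe, id_eq, LinearMap.lsmul_apply, Submodule.Quotient.mk_eq_zero]
          exact (hmem _ _).mpr ⟨m', rfl⟩
      exact flat_of_exact_flat_flat (i.restrictScalars R) (p.restrictScalars R)
        hiinj hpsurj hexact hflat ihflat
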